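/- For n = 2 and all r ≥ 1: dim J_rΛ^0(ℝ^2) = 4 + 4(r−1) + binomial(r−2, 2) − binomial(r+2, 2) and dim J_rΛ^1(ℝ^2) = 0, where binomial(a,b) := 0 when a < b; consequently dim S_r^−Λ^1(□_2) = r² + 2r + 2 for r ≥ 2 and equals 4 for r = 1. -/
import Mathlib


open MvPolynomial

/-- Polynomial differential forms on `ℝ^n`: a family of polynomial coefficients indexed by
subsets `σ ⊆ {1,…,n}`; a `k`-form is supported on sets of cardinality `k`. -/
abbrev PolyForm (n : ℕ) := Finset (Fin n) → MvPolynomial (Fin n) ℝ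

/-- The sign `(-1)^{#{j ∈ σ : j < i}}`. -/
noncomputable def sgn {n : ℕ} (σ : Finset (Fin n)) (i : Fin n) : MvPolynomial (Fin n) ℝ :=
  (-1) ^ (σ.filter (fun j => j < i)).card

/-- The exterior derivative `d`. -/
noncomputable def extD (n : ℕ) : PolyForm n →ₗ[ℝ] PolyForm n where
  toFun ω := fun σ => ∑ i ∈ σ, sgn σ i * pderiv i (ω (σ.erase i))
  map_add' ω η := by
    funext σ
    simp [Pi.add_apply, mul_add, Finset.sum_add_distrib]
  map_smul' c ω := by
    funext σ
    simp [Pi.smul_apply, Finset.smul_sum, mul_smul_comm]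

/-- The Koszul operator `κ` (contraction with the position vector field). -/
noncomputable def koszul (n : ℕ) : PolyForm n →ₗ[ℝ] PolyForm n where
  toFun ω := fun σ => ∑ i ∈ σᶜ, sgn σ i * X i * ω (insert i σ)
  map_add' ω η := by
    funext σ
    simp [Pi.add_apply, mul_add, Finset.sum_add_distrib]
  map_smul' c ω := by
    funext σ
    simp [Pi.smul_apply, Finset.smul_sum, mul_smul_comm]

/-- The space of (polynomial) differential `k`-forms: families supported on index sets of
cardinality `k`. -/
noncomputable def Lambda (n k : ℕ) : Submodule ℝ (PolyForm n) where
  carrier := {ω | ∀ σ, σ.card ≠ k → ω σ = 0}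
  zero_mem' := fun σ _ => rfl
  add_mem' := fun ha hb σ h => by simp only [Pi.add_apply, ha σ h, hb σ h, add_zero]
  smul_mem' := fun c ω h σ hσ => by simp only [Pi.smul_apply, h σ hσ, smul_zero]

/-- The form monomial `x^α dx_σ`. -/
noncomputable def formMonomial {n : ℕ} (α : Fin n →₀ ℕ) (σ : Finset (Fin n)) : PolyForm n :=
  fun τ => if τ = σ then monomial α 1 else 0

/-- The (total) degree `|α|` of a multi-index. -/
def mdeg {n : ℕ} (α : Fin n →₀ ℕ) : ℕ := α.sum fun _ m => m

/-- The linear degree of the form monomial `x^α dx_σ`: the number of `i ∉ σ` with `α i = 1`. -/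
def ldeg {n : ℕ} (α : Fin n →₀ ℕ) (σ : Finset (Fin n)) : ℕ :=
  ((σᶜ).filter fun i => α i = 1).card

/-- `H_rΛ^k(ℝ^n)`: `k`-forms with homogeneous degree-`r` polynomial coefficients. -/
noncomputable def Hspace (n r k : ℕ) : Submodule ℝ (PolyForm n) :=
  Submodule.span ℝ {ω | ∃ α σ, σ.card = k ∧ mdeg α = r ∧ ω = formMonomial α σ}

/-- `P_rΛ^k(ℝ^n)`: `k`-forms with polynomial coefficients of degree at most `r`. -/
noncomputable def Pspace (n r k : ℕ) : Submodule ℝ (PolyForm n) :=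
  Submodule.span ℝ {ω | ∃ α σ, σ.card = k ∧ mdeg α ≤ r ∧ ω = formMonomial α σ}

/-- `H_{r,l}Λ^k(ℝ^n)`: homogeneous degree-`r` `k`-forms of linear degree at least `l`. -/
noncomputable def Hl (n r l k : ℕ) : Submodule ℝ (PolyForm n) :=
  Submodule.span ℝ
    {ω | ∃ α σ, σ.card = k ∧ mdeg α = r ∧ l ≤ ldeg α σ ∧ ω = formMonomial α σ}

/-- `J_rΛ^k(ℝ^n) := Σ_{l ≥ 1} κ H_{r+l-1, l}Λ^{k+1}(ℝ^n)` (here `l` is reindexed as `l+1`). -/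
noncomputable def Jspace (n r k : ℕ) : Submodule ℝ (PolyForm n) :=
  ⨆ l : ℕ, Submodule.map (koszul n) (Hl n (r + l) (l + 1) (k + 1))

/-- The trimmed polynomial space `P_r^-Λ^k := P_{r-1}Λ^k ⊕ κ H_{r-1}Λ^{k+1}`. -/
noncomputable def PminusSpace (n r k : ℕ) : Submodule ℝ (PolyForm n) :=
  Pspace n (r - 1) k ⊔ Submodule.map (koszul n) (Hspace n (r - 1) (k + 1))

/-- The serendipity space `S_rΛ^k := P_rΛ^k + J_rΛ^k + d J_{r+1}Λ^{k-1}`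
(the last summand being absent for `k = 0`). -/
noncomputable def Sspace (n r k : ℕ) : Submodule ℝ (PolyForm n) :=
  Pspace n r k ⊔ Jspace n r k ⊔
    (if k = 0 then ⊥ else Submodule.map (extD n) (Jspace n (r + 1) (k - 1)))

/-- The trimmed serendipity space `S_r^-Λ^k := S_{r-1}Λ^k + κ S_{r-1}Λ^{k+1}`. -/
noncomputable def SminusSpace (n r k : ℕ) : Submodule ℝ (PolyForm n) :=
  Sspace n (r - 1) k ⊔ Submodule.map (koszul n) (Sspace n (r - 1) (k + 1))

/-! ### Auxiliary infrastructure -/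

open Finsupp in
/-- The multi-index `(a, b)` on `Fin 2`. -/
noncomputable def mk2 (a b : ℕ) : Fin 2 →₀ ℕ :=
  Finsupp.single (0 : Fin 2) a + Finsupp.single (1 : Fin 2) b

@[simp] lemma mk2_apply_zero (a b : ℕ) : mk2 a b 0 = a := by
  simp [mk2, Finsupp.single_apply]

@[simp] lemma mk2_apply_one (a b : ℕ) : mk2 a b 1 = b := by
  simp [mk2, Finsupp.single_apply]

lemma eq_mk2 (α : Fin 2 →₀ ℕ) : α = mk2 (α 0) (α 1) := by
  ext i
  fin_cases i <;> simp

lemma mk2_eq_mk2 {a b c d : ℕ} : mk2 a b = mk2 c d ↔ a = c ∧ b = d := by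
  constructor
  · intro h
    constructor
    · have := congrArg (fun f => (f : Fin 2 →₀ ℕ) 0) h
      simpa using this
    · have := congrArg (fun f => (f : Fin 2 →₀ ℕ) 1) h
      simpa using this
  · rintro ⟨rfl, rfl⟩; rfl

lemma mdeg_eq (α : Fin 2 →₀ ℕ) : mdeg α = α 0 + α 1 := by
  rw [mdeg, Finsupp.sum_fintype _ _ (fun _ => rfl), Fin.sum_univ_two]

@[simp] lemma mdeg_mk2 (a b : ℕ) : mdeg (mk2 a b) = a + b := by
  simp [mdeg_eq]

/-- The coefficient functional `ω ↦ coeff α (ω σ)`. -/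
noncomputable def cf (σ : Finset (Fin 2)) (α : Fin 2 →₀ ℕ) : PolyForm 2 →ₗ[ℝ] ℝ where
  toFun ω := coeff α (ω σ)
  map_add' ω η := by simp [coeff_add]
  map_smul' c ω := by simp

lemma cf_fm (σ τ : Finset (Fin 2)) (α β : Fin 2 →₀ ℕ) :
    cf σ α (formMonomial β τ) = if τ = σ ∧ β = α then 1 else 0 := by
  simp only [cf, LinearMap.coe_mk, AddHom.coe_mk, formMonomial]
  by_cases h : σ = τ
  · subst h
    simp [coeff_monomial]
  · rw [if_neg h, if_neg (by tauto)]
    simp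

lemma fm_ne_zero (α : Fin 2 →₀ ℕ) (σ : Finset (Fin 2)) : formMonomial α σ ≠ 0 := by
  intro h
  have := congrFun h σ
  simp only [formMonomial, if_pos rfl, Pi.zero_apply] at this
  exact one_ne_zero ((MvPolynomial.monomial_eq_zero).1 this)

/-- Linear independence via a biorthogonal family of functionals. -/
lemma linearIndependent_of_dual {ι : Type*} [DecidableEq ι] {V : Type*} [AddCommGroup V]
    [Module ℝ V] (v : ι → V) (e : ι → V →ₗ[ℝ] ℝ)
    (h : ∀ i j, e i (v j) = if i = j then 1 else 0) : LinearIndependent ℝ v := by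
  rw [linearIndependent_iff]
  intro l hl
  ext i
  have h2 := congrArg (e i) hl
  rw [Finsupp.linearCombination_apply, Finsupp.sum, map_sum, map_zero] at h2
  simp only [map_smul, h, smul_eq_mul, mul_ite, mul_one, mul_zero] at h2
  rw [Finset.sum_ite_eq l.support i (fun j => l j)] at h2
  by_cases hi : i ∈ l.support
  · rw [if_pos hi] at h2; simpa using h2
  · simpa using Finsupp.notMem_support_iff.1 hi
lemma koszul_apply (ω : PolyForm 2) (σ : Finset (Fin 2)) :
    koszul 2 ω σ = ∑ i ∈ σᶜ, sgn σ i * X i * ω (insert i σ) := rfl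

lemma extD_apply (ω : PolyForm 2) (σ : Finset (Fin 2)) :
    extD 2 ω σ = ∑ i ∈ σ, sgn σ i * pderiv i (ω (σ.erase i)) := rfl

lemma fm_self (α : Fin 2 →₀ ℕ) (σ : Finset (Fin 2)) :
    formMonomial α σ σ = monomial α 1 := if_pos rfl

lemma fm_ne (α : Fin 2 →₀ ℕ) {σ τ : Finset (Fin 2)} (h : τ ≠ σ) :
    formMonomial α σ τ = 0 := if_neg h

lemma finset_fin2 (σ : Finset (Fin 2)) :
    σ = ∅ ∨ σ = {0} ∨ σ = {1} ∨ σ = Finset.univ := by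
  revert σ; decide

lemma sgn_empty (i : Fin 2) : sgn (∅ : Finset (Fin 2)) i = 1 := by
  simp [sgn]

lemma sgn10 : sgn ({1} : Finset (Fin 2)) 0 = 1 := by
  have h : (Finset.filter (fun j => j < (0 : Fin 2)) ({1} : Finset (Fin 2))).card = 0 := by decide
  rw [sgn, h, pow_zero]

lemma sgn01 : sgn ({0} : Finset (Fin 2)) 1 = -1 := by
  have h : (Finset.filter (fun j => j < (1 : Fin 2)) ({0} : Finset (Fin 2))).card = 1 := by decide
  rw [sgn, h, pow_one]

lemma sgn00 : sgn ({0} : Finset (Fin 2)) 0 = 1 := by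
  have h : (Finset.filter (fun j => j < (0 : Fin 2)) ({0} : Finset (Fin 2))).card = 0 := by decide
  rw [sgn, h, pow_zero]

lemma sgn11 : sgn ({1} : Finset (Fin 2)) 1 = 1 := by
  have h : (Finset.filter (fun j => j < (1 : Fin 2)) ({1} : Finset (Fin 2))).card = 0 := by decide
  rw [sgn, h, pow_zero]

lemma X_mul_mono (i : Fin 2) (s : Fin 2 →₀ ℕ) :
    X i * monomial s (1 : ℝ) = monomial (Finsupp.single i 1 + s) 1 := by
  rw [monomial_single_add, pow_one]

lemma single0_add_mk2 (a b : ℕ) : Finsupp.single (0 : Fin 2) 1 + mk2 a b = mk2 (a + 1) b := by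
  ext i; fin_cases i <;> simp [Finsupp.single_apply, add_comm]

lemma single1_add_mk2 (a b : ℕ) : Finsupp.single (1 : Fin 2) 1 + mk2 a b = mk2 a (b + 1) := by
  ext i; fin_cases i <;> simp [Finsupp.single_apply, add_comm]

lemma mk2_sub_single0 (a b : ℕ) : mk2 a b - Finsupp.single (0 : Fin 2) 1 = mk2 (a - 1) b := by
  ext i; fin_cases i <;> simp [Finsupp.tsub_apply, Finsupp.single_apply]

lemma mk2_sub_single1 (a b : ℕ) : mk2 a b - Finsupp.single (1 : Fin 2) 1 = mk2 a (b - 1) := by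
  ext i; fin_cases i <;> simp [Finsupp.tsub_apply, Finsupp.single_apply]

lemma koszul_fm_dx (a b : ℕ) :
    koszul 2 (formMonomial (mk2 a b) {0}) = formMonomial (mk2 (a + 1) b) ∅ := by
  funext σ
  rw [koszul_apply]
  rcases finset_fin2 σ with rfl | rfl | rfl | rfl
  · rw [Finset.compl_empty, Fin.sum_univ_two]
    rw [show insert (0 : Fin 2) ∅ = ({0} : Finset (Fin 2)) by rfl,
      show insert (1 : Fin 2) ∅ = ({1} : Finset (Fin 2)) by rfl]
    rw [fm_self, fm_ne _ (by decide), fm_self, sgn_empty, sgn_empty, one_mul, one_mul,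
      mul_zero, add_zero, X_mul_mono, single0_add_mk2]
  · rw [show ({0} : Finset (Fin 2))ᶜ = {1} by decide, Finset.sum_singleton,
      fm_ne _ (by decide : insert (1 : Fin 2) ({0} : Finset (Fin 2)) ≠ {0}), mul_zero,
      fm_ne _ (by decide : ({0} : Finset (Fin 2)) ≠ ∅)]
  · rw [show ({1} : Finset (Fin 2))ᶜ = {0} by decide, Finset.sum_singleton,
      fm_ne _ (by decide : insert (0 : Fin 2) ({1} : Finset (Fin 2)) ≠ {0}), mul_zero,
      fm_ne _ (by decide : ({1} : Finset (Fin 2)) ≠ ∅)]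
  · rw [show (Finset.univ : Finset (Fin 2))ᶜ = ∅ by decide, Finset.sum_empty,
      fm_ne _ (by decide : (Finset.univ : Finset (Fin 2)) ≠ ∅)]

lemma koszul_fm_dy (a b : ℕ) :
    koszul 2 (formMonomial (mk2 a b) {1}) = formMonomial (mk2 a (b + 1)) ∅ := by
  funext σ
  rw [koszul_apply]
  rcases finset_fin2 σ with rfl | rfl | rfl | rfl
  · rw [Finset.compl_empty, Fin.sum_univ_two]
    rw [show insert (0 : Fin 2) ∅ = ({0} : Finset (Fin 2)) by rfl,
      show insert (1 : Fin 2) ∅ = ({1} : Finset (Fin 2)) by rfl]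
    rw [fm_self, fm_ne _ (by decide), fm_self, sgn_empty, sgn_empty, one_mul, one_mul,
      mul_zero, zero_add, X_mul_mono, single1_add_mk2]
  · rw [show ({0} : Finset (Fin 2))ᶜ = {1} by decide, Finset.sum_singleton,
      fm_ne _ (by decide : insert (1 : Fin 2) ({0} : Finset (Fin 2)) ≠ {1}), mul_zero,
      fm_ne _ (by decide : ({0} : Finset (Fin 2)) ≠ ∅)]
  · rw [show ({1} : Finset (Fin 2))ᶜ = {0} by decide, Finset.sum_singleton,
      fm_ne _ (by decide : insert (0 : Fin 2) ({1} : Finset (Fin 2)) ≠ {1}), mul_zero,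
      fm_ne _ (by decide : ({1} : Finset (Fin 2)) ≠ ∅)]
  · rw [show (Finset.univ : Finset (Fin 2))ᶜ = ∅ by decide, Finset.sum_empty,
      fm_ne _ (by decide : (Finset.univ : Finset (Fin 2)) ≠ ∅)]

lemma koszul_fm_2 (a b : ℕ) :
    koszul 2 (formMonomial (mk2 a b) Finset.univ) =
      formMonomial (mk2 (a + 1) b) {1} - formMonomial (mk2 a (b + 1)) {0} := by
  funext σ
  rw [koszul_apply]
  rcases finset_fin2 σ with rfl | rfl | rfl | rfl
  · rw [Finset.compl_empty, Fin.sum_univ_two]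
    rw [show insert (0 : Fin 2) ∅ = ({0} : Finset (Fin 2)) by rfl,
      show insert (1 : Fin 2) ∅ = ({1} : Finset (Fin 2)) by rfl]
    rw [fm_ne _ (by decide : ({0} : Finset (Fin 2)) ≠ Finset.univ),
      fm_ne _ (by decide : ({1} : Finset (Fin 2)) ≠ Finset.univ)]
    simp only [Pi.sub_apply, mul_zero, add_zero,
      fm_ne _ (by decide : (∅ : Finset (Fin 2)) ≠ {1}),
      fm_ne _ (by decide : (∅ : Finset (Fin 2)) ≠ {0}), sub_zero]
  · rw [show ({0} : Finset (Fin 2))ᶜ = {1} by decide, Finset.sum_singleton,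
      show insert (1 : Fin 2) ({0} : Finset (Fin 2)) = Finset.univ by decide, fm_self, sgn01]
    simp only [Pi.sub_apply, fm_ne _ (by decide : ({0} : Finset (Fin 2)) ≠ {1}), fm_self,
      zero_sub]
    have h := X_mul_mono 1 (mk2 a b)
    rw [single1_add_mk2] at h
    linear_combination -h
  · rw [show ({1} : Finset (Fin 2))ᶜ = {0} by decide, Finset.sum_singleton,
      show insert (0 : Fin 2) ({1} : Finset (Fin 2)) = Finset.univ by decide, fm_self, sgn10]
    simp only [Pi.sub_apply, fm_ne _ (by decide : ({1} : Finset (Fin 2)) ≠ {0}), fm_self,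
      sub_zero, X_mul_mono, single0_add_mk2, one_mul]
  · rw [show (Finset.univ : Finset (Fin 2))ᶜ = ∅ by decide, Finset.sum_empty]
    simp only [Pi.sub_apply, fm_ne _ (by decide : (Finset.univ : Finset (Fin 2)) ≠ {1}),
      fm_ne _ (by decide : (Finset.univ : Finset (Fin 2)) ≠ {0}), sub_zero]

lemma extD_fm_0 (a b : ℕ) :
    extD 2 (formMonomial (mk2 a b) ∅) =
      (a : ℝ) • formMonomial (mk2 (a - 1) b) {0} + (b : ℝ) • formMonomial (mk2 a (b - 1)) {1} := by
  funext σ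
  rw [extD_apply]
  rcases finset_fin2 σ with rfl | rfl | rfl | rfl
  · rw [Finset.sum_empty]
    simp only [Pi.add_apply, Pi.smul_apply,
      fm_ne _ (by decide : (∅ : Finset (Fin 2)) ≠ {0}),
      fm_ne _ (by decide : (∅ : Finset (Fin 2)) ≠ {1}), smul_zero, add_zero]
  · rw [Finset.sum_singleton, show Finset.erase {0} (0 : Fin 2) = ∅ by decide, fm_self, sgn00,
      one_mul, pderiv_monomial, mk2_sub_single0]
    simp only [Pi.add_apply, Pi.smul_apply, fm_self,
      fm_ne _ (by decide : ({0} : Finset (Fin 2)) ≠ {1}), smul_zero, add_zero, mk2_apply_zero,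
      one_mul]
    rw [MvPolynomial.smul_monomial, smul_eq_mul, mul_one]
  · rw [Finset.sum_singleton, show Finset.erase {1} (1 : Fin 2) = ∅ by decide, fm_self, sgn11,
      one_mul, pderiv_monomial, mk2_sub_single1]
    simp only [Pi.add_apply, Pi.smul_apply, fm_self,
      fm_ne _ (by decide : ({1} : Finset (Fin 2)) ≠ {0}), smul_zero, zero_add, mk2_apply_one,
      one_mul]
    rw [MvPolynomial.smul_monomial, smul_eq_mul, mul_one]
  · rw [Fin.sum_univ_two, show Finset.erase Finset.univ (0 : Fin 2) = {1} by decide,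
      show Finset.erase Finset.univ (1 : Fin 2) = {0} by decide,
      fm_ne _ (by decide : ({1} : Finset (Fin 2)) ≠ ∅),
      fm_ne _ (by decide : ({0} : Finset (Fin 2)) ≠ ∅)]
    simp only [map_zero, mul_zero, add_zero, Pi.add_apply, Pi.smul_apply,
      fm_ne _ (by decide : (Finset.univ : Finset (Fin 2)) ≠ {0}),
      fm_ne _ (by decide : (Finset.univ : Finset (Fin 2)) ≠ {1}), smul_zero]
lemma Hl2_bot (r l : ℕ) : Hl 2 r (l + 1) 2 = ⊥ := by
  have hset : {ω : PolyForm 2 | ∃ α σ, σ.card = 2 ∧ mdeg α = r ∧ l + 1 ≤ ldeg α σ ∧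
      ω = formMonomial α σ} = ∅ := by
    ext ω
    simp only [Set.mem_setOf_eq, Set.mem_empty_iff_false, iff_false]
    rintro ⟨α, σ, hc, -, hl, -⟩
    have hσ : σ = Finset.univ := Finset.eq_univ_of_card σ (by simpa using hc)
    rw [ldeg, hσ, Finset.compl_univ, Finset.filter_empty, Finset.card_empty] at hl
    omega
  rw [Hl, hset, Submodule.span_empty]

lemma Hl3_bot (r l : ℕ) : Hl 2 r l 3 = ⊥ := by
  have hset : {ω : PolyForm 2 | ∃ α σ, σ.card = 3 ∧ mdeg α = r ∧ l ≤ ldeg α σ ∧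
      ω = formMonomial α σ} = ∅ := by
    ext ω
    simp only [Set.mem_setOf_eq, Set.mem_empty_iff_false, iff_false]
    rintro ⟨α, σ, hc, -⟩
    have := Finset.card_le_univ σ
    simp only [Finset.card_univ, Fintype.card_fin] at this
    omega
  rw [Hl, hset, Submodule.span_empty]

lemma Hl1_bot (r l : ℕ) : Hl 2 r (l + 2) 1 = ⊥ := by
  have hset : {ω : PolyForm 2 | ∃ α σ, σ.card = 1 ∧ mdeg α = r ∧ l + 2 ≤ ldeg α σ ∧
      ω = formMonomial α σ} = ∅ := by
    ext ω
    simp only [Set.mem_setOf_eq, Set.mem_empty_iff_false, iff_false]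
    rintro ⟨α, σ, hc, -, hl, -⟩
    have h1 : ldeg α σ ≤ σᶜ.card := Finset.card_filter_le _ _
    have h2 : σᶜ.card = 2 - σ.card := by
      rw [Finset.card_compl]; simp
    omega
  rw [Hl, hset, Submodule.span_empty]

lemma card_one_cases : ∀ {σ : Finset (Fin 2)}, σ.card = 1 → σ = {0} ∨ σ = {1} := by
  decide

lemma Hl11_span (r : ℕ) (hr : 1 ≤ r) :
    Hl 2 r 1 1 = Submodule.span ℝ
      {formMonomial (mk2 (r - 1) 1) {0}, formMonomial (mk2 1 (r - 1)) {1}} := by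
  rw [Hl]
  congr 1
  ext ω
  simp only [Set.mem_setOf_eq, Set.mem_insert_iff, Set.mem_singleton_iff]
  constructor
  · rintro ⟨α, σ, hc, hd, hl, rfl⟩
    rcases card_one_cases hc with rfl | rfl
    · left
      rw [ldeg, show ({0} : Finset (Fin 2))ᶜ = {1} by decide, Finset.filter_singleton] at hl
      have h1 : α 1 = 1 := by
        by_contra hne
        rw [if_neg hne, Finset.card_empty] at hl; omega
      rw [mdeg_eq] at hd
      have h0 : α 0 = r - 1 := by omega
      rw [eq_mk2 α, h0, h1]
    · right
      rw [ldeg, show ({1} : Finset (Fin 2))ᶜ = {0} by decide, Finset.filter_singleton] at hl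
      have h0 : α 0 = 1 := by
        by_contra hne
        rw [if_neg hne, Finset.card_empty] at hl; omega
      rw [mdeg_eq] at hd
      have h1 : α 1 = r - 1 := by omega
      rw [eq_mk2 α, h0, h1]
  · rintro (rfl | rfl)
    · refine ⟨mk2 (r - 1) 1, {0}, by decide, by rw [mdeg_mk2]; omega, ?_, rfl⟩
      rw [ldeg, show ({0} : Finset (Fin 2))ᶜ = {1} by decide, Finset.filter_singleton,
        if_pos (by simp)]
      simp
    · refine ⟨mk2 1 (r - 1), {1}, by decide, by rw [mdeg_mk2]; omega, ?_, rfl⟩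
      rw [ldeg, show ({1} : Finset (Fin 2))ᶜ = {0} by decide, Finset.filter_singleton,
        if_pos (by simp)]
      simp

lemma J1_bot (r : ℕ) : Jspace 2 r 1 = ⊥ := by
  rw [Jspace]
  refine le_bot_iff.1 (iSup_le fun l => ?_)
  rw [Hl2_bot, Submodule.map_bot]

lemma J2_bot (r : ℕ) : Jspace 2 r 2 = ⊥ := by
  rw [Jspace]
  refine le_bot_iff.1 (iSup_le fun l => ?_)
  rw [Hl3_bot, Submodule.map_bot]

lemma J0_span (r : ℕ) (hr : 1 ≤ r) :
    Jspace 2 r 0 = Submodule.span ℝ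
      {formMonomial (mk2 r 1) ∅, formMonomial (mk2 1 r) ∅} := by
  have h0 : Submodule.map (koszul 2) (Hl 2 (r + 0) (0 + 1) 1) =
      Submodule.span ℝ {formMonomial (mk2 r 1) ∅, formMonomial (mk2 1 r) ∅} := by
    rw [show r + 0 = r from rfl, show 0 + 1 = 1 from rfl, Hl11_span r hr, Submodule.map_span,
      Set.image_insert_eq, Set.image_singleton, koszul_fm_dx, koszul_fm_dy,
      show r - 1 + 1 = r by omega]
  rw [Jspace]
  apply le_antisymm
  · refine iSup_le fun l => ?_
    match l with
    | 0 => exact le_of_eq h0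
    | Nat.succ n =>
      rw [show n + 1 + 1 = n + 2 from rfl, Hl1_bot, Submodule.map_bot]
      exact bot_le
  · exact h0 ▸ le_iSup (fun l => Submodule.map (koszul 2) (Hl 2 (r + l) (l + 1) 1)) 0

lemma S2_eq (r' : ℕ) : Sspace 2 r' 2 = Pspace 2 r' 2 := by
  rw [Sspace, if_neg (by norm_num), J2_bot, show (2 : ℕ) - 1 = 1 from rfl, J1_bot,
    Submodule.map_bot, sup_bot_eq, sup_bot_eq]

/-- the two `dJ` generators -/
noncomputable def dj1 (r : ℕ) : PolyForm 2 := extD 2 (formMonomial (mk2 r 1) ∅)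
noncomputable def dj2 (r : ℕ) : PolyForm 2 := extD 2 (formMonomial (mk2 1 r) ∅)

lemma S1_eq (r : ℕ) (hr : 1 ≤ r) :
    Sspace 2 (r - 1) 1 =
      Pspace 2 (r - 1) 1 ⊔ Submodule.span ℝ {dj1 r, dj2 r} := by
  rw [Sspace, if_neg one_ne_zero, J1_bot, sup_bot_eq, show (1 : ℕ) - 1 = 0 from rfl,
    show r - 1 + 1 = r by omega, J0_span r hr, Submodule.map_span, Set.image_insert_eq,
    Set.image_singleton, dj1, dj2]

lemma Sm_eq (r : ℕ) (hr : 1 ≤ r) :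
    SminusSpace 2 r 1 =
      (Pspace 2 (r - 1) 1 ⊔ Submodule.span ℝ {dj1 r, dj2 r}) ⊔
        Submodule.map (koszul 2) (Pspace 2 (r - 1) 2) := by
  rw [SminusSpace, S1_eq r hr, S2_eq]
lemma range_fin2 {V : Type*} (a b : V) : Set.range ![a, b] = {a, b} := by
  ext x
  simp [Fin.exists_fin_two]
  tauto

lemma J0_rank_two (r : ℕ) (hr : 2 ≤ r) : Module.finrank ℝ (Jspace 2 r 0) = 2 := by
  rw [J0_span r (by omega), ← range_fin2]
  have hli : LinearIndependent ℝ ![formMonomial (mk2 r 1) ∅, formMonomial (mk2 1 r) ∅] := by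
    apply linearIndependent_of_dual _ ![cf ∅ (mk2 r 1), cf ∅ (mk2 1 r)]
    intro i j
    fin_cases i <;> fin_cases j <;>
      simp [cf_fm, mk2_eq_mk2] <;> omega
  rw [finrank_span_eq_card hli, Fintype.card_fin]

lemma J0_rank_one : Module.finrank ℝ (Jspace 2 1 0) = 1 := by
  rw [J0_span 1 le_rfl, Set.pair_eq_singleton]
  exact finrank_span_singleton (fm_ne_zero _ _)

lemma choose_step (n : ℕ) : (n + 1).choose 2 = n + n.choose 2 := by
  rw [Nat.choose_succ_succ, Nat.choose_one_right]

lemma claim1 (r : ℕ) (hr : 1 ≤ r) :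
    (Module.finrank ℝ (Jspace 2 r 0) : ℤ) =
      4 + 4 * ((r : ℤ) - 1) + ((r - 2).choose 2 : ℤ) - ((r + 2).choose 2 : ℤ) := by
  rcases eq_or_lt_of_le hr with heq | hlt
  · rw [← heq, J0_rank_one]
    decide
  · obtain ⟨m, rfl⟩ : ∃ m, r = m + 2 := ⟨r - 2, by omega⟩
    rw [J0_rank_two _ (by omega)]
    have h4 : (m + 2 + 2).choose 2 = m + 3 + (m + 2 + (m + 1 + (m + m.choose 2))) := by
      rw [show m + 2 + 2 = m + 3 + 1 from rfl, choose_step, show m + 3 = m + 2 + 1 from rfl,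
        choose_step, show m + 2 = m + 1 + 1 from rfl, choose_step,
        show m + 1 = m + 1 from rfl, choose_step]
    rw [show m + 2 - 2 = m from rfl, h4]
    push_cast
    ring
/-- Index type for the basis of `S_r^-Λ^1(ℝ²)`, `r ≥ 2`. -/
abbrev Idx (r : ℕ) :=
  (Fin 2 × ((s : Fin r) × Fin (s.1 + 1))) ⊕ (Fin (r - 2) ⊕ (Bool × Bool))

/-- The basis family. -/
noncomputable def vv (r : ℕ) : Idx r → PolyForm 2
  | .inl ⟨t, ⟨s, a⟩⟩ => formMonomial (mk2 a.1 (s.1 - a.1)) {t}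
  | .inr (.inl b) =>
      formMonomial (mk2 (b.1 + 2) (r - 2 - b.1)) {1} -
        formMonomial (mk2 (b.1 + 1) (r - 1 - b.1)) {0}
  | .inr (.inr (false, false)) => formMonomial (mk2 r 0) {1}
  | .inr (.inr (false, true)) => formMonomial (mk2 1 (r - 1)) {1}
  | .inr (.inr (true, false)) => formMonomial (mk2 (r - 1) 1) {0}
  | .inr (.inr (true, true)) => formMonomial (mk2 0 r) {0}

/-- The dual family. -/
noncomputable def ee (r : ℕ) : Idx r → (PolyForm 2 →ₗ[ℝ] ℝ)
  | .inl ⟨t, ⟨s, a⟩⟩ => cf {t} (mk2 a.1 (s.1 - a.1))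
  | .inr (.inl b) => -cf {0} (mk2 (b.1 + 1) (r - 1 - b.1))
  | .inr (.inr (false, false)) => cf {1} (mk2 r 0)
  | .inr (.inr (false, true)) => cf {1} (mk2 1 (r - 1))
  | .inr (.inr (true, false)) => cf {0} (mk2 (r - 1) 1)
  | .inr (.inr (true, true)) => cf {0} (mk2 0 r)

lemma sigma_eq_iff {r : ℕ} {s s' : Fin r} {a : Fin (s.1 + 1)} {a' : Fin (s'.1 + 1)} :
    (⟨s, a⟩ : (s : Fin r) × Fin (s.1 + 1)) = ⟨s', a'⟩ ↔ s.1 = s'.1 ∧ a.1 = a'.1 := by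
  constructor
  · intro h
    injection h with h1 h2
    subst h1
    exact ⟨rfl, by rw [eq_of_heq h2]⟩
  · rintro ⟨hs, ha⟩
    have h1 : s = s' := Fin.ext hs
    subst h1
    have h2 : a = a' := Fin.ext ha
    subst h2
    rfl

lemma card_Idx (r : ℕ) (hr : 2 ≤ r) : Fintype.card (Idx r) = r ^ 2 + 2 * r + 2 := by
  obtain ⟨m, rfl⟩ : ∃ m, r = m + 2 := ⟨r - 2, by omega⟩
  have hS : (∑ i ∈ Finset.range (m + 2), i) * 2 = (m + 2) * (m + 1) := by
    simpa using Finset.sum_range_id_mul_two (m + 2)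
  have hsig : Fintype.card ((s : Fin (m + 2)) × Fin (s.1 + 1)) =
      (∑ i ∈ Finset.range (m + 2), i) + (m + 2) := by
    rw [Fintype.card_sigma]
    simp only [Fintype.card_fin]
    rw [Fin.sum_univ_eq_sum_range (fun i => i + 1) (m + 2), Finset.sum_add_distrib]
    simp
  simp only [Idx, Fintype.card_sum, Fintype.card_prod, Fintype.card_fin, Fintype.card_bool, hsig]
  have hm : m + 2 - 2 = m := by omega
  rw [hm]
  nlinarith [hS]

lemma cf_fm_self (σ : Finset (Fin 2)) (α : Fin 2 →₀ ℕ) : cf σ α (formMonomial α σ) = 1 := by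
  rw [cf_fm, if_pos ⟨rfl, rfl⟩]

lemma cf_fm_ne2 (α β : Fin 2 →₀ ℕ) {σ τ : Finset (Fin 2)} (h : τ ≠ σ) :
    cf σ α (formMonomial β τ) = 0 := by
  rw [cf_fm, if_neg]; tauto

lemma cf_mk2_ne (σ τ : Finset (Fin 2)) {a b c d : ℕ} (h : ¬(a = c ∧ b = d)) :
    cf σ (mk2 c d) (formMonomial (mk2 a b) τ) = 0 := by
  rw [cf_fm, if_neg]
  rintro ⟨-, hm⟩
  exact h (mk2_eq_mk2.1 hm)
lemma dual_ee_vv (r : ℕ) (hr : 2 ≤ r) (i j : Idx r) :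
    ee r i (vv r j) = if i = j then 1 else 0 := by
  rcases i with ⟨t, s, a⟩ | b | ⟨u, w⟩
  · rcases j with ⟨t', s', a'⟩ | b' | ⟨u', w'⟩
    · -- A A
      have hs := s.isLt; have hs' := s'.isLt; have ha := a.isLt; have ha' := a'.isLt
      simp only [ee, vv, cf_fm, Finset.singleton_inj, mk2_eq_mk2, Sum.inl.injEq,
        Prod.mk.injEq, sigma_eq_iff]
      by_cases h : t = t' ∧ s.1 = s'.1 ∧ a.1 = a'.1
      · rw [if_pos ⟨h.1.symm, h.2.2.symm, by omega⟩, if_pos h]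
      · rw [if_neg fun hc => h ⟨hc.1.symm, by omega, hc.2.1.symm⟩, if_neg h]
    · -- A B
      have hs := s.isLt; have ha := a.isLt; have hb := b'.isLt
      have h1 : ¬(b'.1 + 2 = a.1 ∧ r - 2 - b'.1 = s.1 - a.1) := by omega
      have h2 : ¬(b'.1 + 1 = a.1 ∧ r - 1 - b'.1 = s.1 - a.1) := by omega
      simp only [ee, vv, map_sub]
      rw [cf_mk2_ne _ _ h1, cf_mk2_ne _ _ h2]
      simp
    · -- A C
      have hs := s.isLt; have ha := a.isLt
      rcases u' <;> rcases w'
      · have h1 : ¬(r = a.1 ∧ 0 = s.1 - a.1) := by omega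
        simp only [ee, vv]; rw [cf_mk2_ne _ _ h1]; simp
      · have h1 : ¬(1 = a.1 ∧ r - 1 = s.1 - a.1) := by omega
        simp only [ee, vv]; rw [cf_mk2_ne _ _ h1]; simp
      · have h1 : ¬(r - 1 = a.1 ∧ 1 = s.1 - a.1) := by omega
        simp only [ee, vv]; rw [cf_mk2_ne _ _ h1]; simp
      · have h1 : ¬(0 = a.1 ∧ r = s.1 - a.1) := by omega
        simp only [ee, vv]; rw [cf_mk2_ne _ _ h1]; simp
  · rcases j with ⟨t', s', a'⟩ | b' | ⟨u', w'⟩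
    · -- B A
      have hb := b.isLt; have hs' := s'.isLt; have ha' := a'.isLt
      have h1 : ¬(a'.1 = b.1 + 1 ∧ s'.1 - a'.1 = r - 1 - b.1) := by omega
      simp only [ee, vv, LinearMap.neg_apply]
      rw [cf_mk2_ne _ _ h1]
      simp
    · -- B B
      have hb := b.isLt; have hb' := b'.isLt
      simp only [ee, vv, LinearMap.neg_apply, map_sub]
      rw [cf_fm_ne2 _ _ (show ({1} : Finset (Fin 2)) ≠ {0} by decide)]
      by_cases h : b = b'
      · subst h
        rw [cf_fm_self]
        simp
      · have h2 : ¬(b'.1 + 1 = b.1 + 1 ∧ r - 1 - b'.1 = r - 1 - b.1) := by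
          intro hc; exact h (Fin.ext (by omega))
        rw [cf_mk2_ne _ _ h2]
        simp [h]
    · -- B C
      have hb := b.isLt
      rcases u' <;> rcases w'
      · simp only [ee, vv, LinearMap.neg_apply]
        rw [cf_fm_ne2 _ _ (show ({1} : Finset (Fin 2)) ≠ {0} by decide)]
        simp
      · simp only [ee, vv, LinearMap.neg_apply]
        rw [cf_fm_ne2 _ _ (show ({1} : Finset (Fin 2)) ≠ {0} by decide)]
        simp
      · have h1 : ¬(r - 1 = b.1 + 1 ∧ 1 = r - 1 - b.1) := by omega
        simp only [ee, vv, LinearMap.neg_apply]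
        rw [cf_mk2_ne _ _ h1]
        simp
      · have h1 : ¬(0 = b.1 + 1 ∧ r = r - 1 - b.1) := by omega
        simp only [ee, vv, LinearMap.neg_apply]
        rw [cf_mk2_ne _ _ h1]
        simp
  · rcases j with ⟨t', s', a'⟩ | b' | ⟨u', w'⟩
    · -- C A
      have hs' := s'.isLt; have ha' := a'.isLt
      rcases u <;> rcases w
      · have h1 : ¬(a'.1 = r ∧ s'.1 - a'.1 = 0) := by omega
        simp only [ee, vv]; rw [cf_mk2_ne _ _ h1]; simp
      · have h1 : ¬(a'.1 = 1 ∧ s'.1 - a'.1 = r - 1) := by omega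
        simp only [ee, vv]; rw [cf_mk2_ne _ _ h1]; simp
      · have h1 : ¬(a'.1 = r - 1 ∧ s'.1 - a'.1 = 1) := by omega
        simp only [ee, vv]; rw [cf_mk2_ne _ _ h1]; simp
      · have h1 : ¬(a'.1 = 0 ∧ s'.1 - a'.1 = r) := by omega
        simp only [ee, vv]; rw [cf_mk2_ne _ _ h1]; simp
    · -- C B
      have hb' := b'.isLt
      rcases u <;> rcases w
      · have h1 : ¬(b'.1 + 2 = r ∧ r - 2 - b'.1 = 0) := by omega
        simp only [ee, vv, map_sub]
        rw [cf_mk2_ne _ _ h1,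
          cf_fm_ne2 _ _ (show ({0} : Finset (Fin 2)) ≠ {1} by decide)]
        simp
      · have h1 : ¬(b'.1 + 2 = 1 ∧ r - 2 - b'.1 = r - 1) := by omega
        simp only [ee, vv, map_sub]
        rw [cf_mk2_ne _ _ h1,
          cf_fm_ne2 _ _ (show ({0} : Finset (Fin 2)) ≠ {1} by decide)]
        simp
      · have h1 : ¬(b'.1 + 1 = r - 1 ∧ r - 1 - b'.1 = 1) := by omega
        simp only [ee, vv, map_sub]
        rw [cf_mk2_ne _ _ h1,
          cf_fm_ne2 _ _ (show ({1} : Finset (Fin 2)) ≠ {0} by decide)]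
        simp
      · have h1 : ¬(b'.1 + 1 = 0 ∧ r - 1 - b'.1 = r) := by omega
        simp only [ee, vv, map_sub]
        rw [cf_mk2_ne _ _ h1,
          cf_fm_ne2 _ _ (show ({1} : Finset (Fin 2)) ≠ {0} by decide)]
        simp
    · -- C C
      rcases u <;> rcases w <;> rcases u' <;> rcases w' <;> simp only [ee, vv]
      · rw [cf_fm_self]; simp
      · have h1 : ¬(1 = r ∧ r - 1 = 0) := by omega
        rw [cf_mk2_ne _ _ h1]; simp
      · rw [cf_fm_ne2 _ _ (show ({0} : Finset (Fin 2)) ≠ {1} by decide)]; simp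
      · rw [cf_fm_ne2 _ _ (show ({0} : Finset (Fin 2)) ≠ {1} by decide)]; simp
      · have h1 : ¬(r = 1 ∧ 0 = r - 1) := by omega
        rw [cf_mk2_ne _ _ h1]; simp
      · rw [cf_fm_self]; simp
      · rw [cf_fm_ne2 _ _ (show ({0} : Finset (Fin 2)) ≠ {1} by decide)]; simp
      · rw [cf_fm_ne2 _ _ (show ({0} : Finset (Fin 2)) ≠ {1} by decide)]; simp
      · rw [cf_fm_ne2 _ _ (show ({1} : Finset (Fin 2)) ≠ {0} by decide)]; simp
      · rw [cf_fm_ne2 _ _ (show ({1} : Finset (Fin 2)) ≠ {0} by decide)]; simp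
      · rw [cf_fm_self]; simp
      · have h1 : ¬(0 = r - 1 ∧ r = 1) := by omega
        rw [cf_mk2_ne _ _ h1]; simp
      · rw [cf_fm_ne2 _ _ (show ({1} : Finset (Fin 2)) ≠ {0} by decide)]; simp
      · rw [cf_fm_ne2 _ _ (show ({1} : Finset (Fin 2)) ≠ {0} by decide)]; simp
      · have h1 : ¬(r - 1 = 0 ∧ 1 = r) := by omega
        rw [cf_mk2_ne _ _ h1]; simp
      · rw [cf_fm_self]; simp
lemma card_two_univ : ∀ {σ : Finset (Fin 2)}, σ.card = 2 → σ = Finset.univ := by decide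

lemma Sm_span_eq (r : ℕ) (hr : 2 ≤ r) :
    SminusSpace 2 r 1 = Submodule.span ℝ (Set.range (vv r)) := by
  have hr1 : (1 : ℕ) ≤ r := by omega
  rw [Sm_eq r hr1]
  apply le_antisymm
  · refine sup_le (sup_le ?_ ?_) ?_
    · -- P part
      rw [Pspace]
      refine Submodule.span_le.2 ?_
      rintro ω ⟨α, σ, hc, hd, rfl⟩
      rcases card_one_cases hc with rfl | rfl
      · refine Submodule.subset_span
          ⟨Sum.inl (0, ⟨⟨mdeg α, by omega⟩, ⟨α 0, show α 0 < mdeg α + 1 by rw [mdeg_eq]; omega⟩⟩), ?_⟩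
        show formMonomial (mk2 (α 0) (mdeg α - α 0)) {(0 : Fin 2)} = formMonomial α {0}
        rw [show mdeg α - α 0 = α 1 by rw [mdeg_eq]; omega, ← eq_mk2]
      · refine Submodule.subset_span
          ⟨Sum.inl (1, ⟨⟨mdeg α, by omega⟩, ⟨α 0, show α 0 < mdeg α + 1 by rw [mdeg_eq]; omega⟩⟩), ?_⟩
        show formMonomial (mk2 (α 0) (mdeg α - α 0)) {(1 : Fin 2)} = formMonomial α {1}
        rw [show mdeg α - α 0 = α 1 by rw [mdeg_eq]; omega, ← eq_mk2]
    · -- dJ part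
      refine Submodule.span_le.2 ?_
      rintro x hx
      simp only [Set.mem_insert_iff, Set.mem_singleton_iff] at hx
      rcases hx with rfl | rfl
      · rw [dj1, extD_fm_0]
        exact Submodule.add_mem _
          (Submodule.smul_mem _ _
            (Submodule.subset_span ⟨Sum.inr (Sum.inr (true, false)), rfl⟩))
          (Submodule.smul_mem _ _
            (Submodule.subset_span ⟨Sum.inr (Sum.inr (false, false)), rfl⟩))
      · rw [dj2, extD_fm_0]
        exact Submodule.add_mem _
          (Submodule.smul_mem _ _
            (Submodule.subset_span ⟨Sum.inr (Sum.inr (true, true)), rfl⟩))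
          (Submodule.smul_mem _ _
            (Submodule.subset_span ⟨Sum.inr (Sum.inr (false, true)), rfl⟩))
    · -- κP part
      rw [Pspace, Submodule.map_span]
      refine Submodule.span_le.2 ?_
      rintro x ⟨ω, ⟨α, σ, hc, hd, rfl⟩, rfl⟩
      have hσ : σ = Finset.univ := card_two_univ hc
      subst hσ
      rw [mdeg_eq] at hd
      rw [show (α : Fin 2 →₀ ℕ) = mk2 (α 0) (α 1) from eq_mk2 α, koszul_fm_2]
      by_cases hcase : α 0 + α 1 ≤ r - 2
      · exact Submodule.sub_mem _
          (Submodule.subset_span ⟨Sum.inl (1, ⟨⟨α 0 + α 1 + 1, by omega⟩, ⟨α 0 + 1, show α 0 + 1 < α 0 + α 1 + 1 + 1 by omega⟩⟩), by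
            show formMonomial (mk2 (α 0 + 1) (α 0 + α 1 + 1 - (α 0 + 1))) {(1 : Fin 2)} = _
            rw [show α 0 + α 1 + 1 - (α 0 + 1) = α 1 by omega]⟩)
          (Submodule.subset_span ⟨Sum.inl (0, ⟨⟨α 0 + α 1 + 1, by omega⟩, ⟨α 0, show α 0 < α 0 + α 1 + 1 + 1 by omega⟩⟩), by
            show formMonomial (mk2 (α 0) (α 0 + α 1 + 1 - α 0)) {(0 : Fin 2)} = _
            rw [show α 0 + α 1 + 1 - α 0 = α 1 + 1 by omega]⟩)
      · by_cases h0 : α 0 = 0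
        · rw [h0, show α 1 = r - 1 by omega]
          exact Submodule.sub_mem _
            (Submodule.subset_span ⟨Sum.inr (Sum.inr (false, true)), rfl⟩)
            (Submodule.subset_span ⟨Sum.inr (Sum.inr (true, true)), by
              show _ = formMonomial (mk2 0 (r - 1 + 1)) {0}
              rw [show r - 1 + 1 = r by omega]
              rfl⟩)
        · by_cases h1 : α 1 = 0
          · rw [h1, show α 0 = r - 1 by omega]
            exact Submodule.sub_mem _
              (Submodule.subset_span ⟨Sum.inr (Sum.inr (false, false)), by
                show _ = formMonomial (mk2 (r - 1 + 1) 0) {1}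
                rw [show r - 1 + 1 = r by omega]
                rfl⟩)
              (Submodule.subset_span ⟨Sum.inr (Sum.inr (true, false)), rfl⟩)
          · refine Submodule.subset_span ⟨Sum.inr (Sum.inl ⟨α 0 - 1, by omega⟩), ?_⟩
            show formMonomial (mk2 (α 0 - 1 + 2) (r - 2 - (α 0 - 1))) {1} -
              formMonomial (mk2 (α 0 - 1 + 1) (r - 1 - (α 0 - 1))) {0} = _
            rw [show α 0 - 1 + 2 = α 0 + 1 by omega, show r - 2 - (α 0 - 1) = α 1 by omega,
              show α 0 - 1 + 1 = α 0 by omega, show r - 1 - (α 0 - 1) = α 1 + 1 by omega]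
  · refine Submodule.span_le.2 ?_
    rintro x ⟨idx, rfl⟩
    have hd1 : dj1 r ∈ (Pspace 2 (r - 1) 1 ⊔ Submodule.span ℝ {dj1 r, dj2 r}) ⊔
        Submodule.map (koszul 2) (Pspace 2 (r - 1) 2) :=
      Submodule.mem_sup_left (Submodule.mem_sup_right
        (Submodule.subset_span (Set.mem_insert _ _)))
    have hd2 : dj2 r ∈ (Pspace 2 (r - 1) 1 ⊔ Submodule.span ℝ {dj1 r, dj2 r}) ⊔
        Submodule.map (koszul 2) (Pspace 2 (r - 1) 2) :=
      Submodule.mem_sup_left (Submodule.mem_sup_right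
        (Submodule.subset_span (Set.mem_insert_of_mem _ rfl)))
    have hκ : ∀ aa bb : ℕ, aa + bb ≤ r - 1 →
        koszul 2 (formMonomial (mk2 aa bb) Finset.univ) ∈
          (Pspace 2 (r - 1) 1 ⊔ Submodule.span ℝ {dj1 r, dj2 r}) ⊔
            Submodule.map (koszul 2) (Pspace 2 (r - 1) 2) := fun aa bb h =>
      Submodule.mem_sup_right (Submodule.mem_map_of_mem
        (Submodule.subset_span ⟨mk2 aa bb, Finset.univ, by simp, by rw [mdeg_mk2]; omega, rfl⟩))
    have hP : ∀ (aa bb : ℕ) (t : Fin 2), aa + bb ≤ r - 1 →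
        formMonomial (mk2 aa bb) {t} ∈
          (Pspace 2 (r - 1) 1 ⊔ Submodule.span ℝ {dj1 r, dj2 r}) ⊔
            Submodule.map (koszul 2) (Pspace 2 (r - 1) 2) := fun aa bb t h =>
      Submodule.mem_sup_left (Submodule.mem_sup_left
        (Submodule.subset_span ⟨mk2 aa bb, {t}, Finset.card_singleton _,
          by rw [mdeg_mk2]; omega, rfl⟩))
    rcases idx with ⟨t, s, a⟩ | b | ⟨u, w⟩
    · exact hP a.1 (s.1 - a.1) t (by have := s.isLt; have := a.isLt; omega)
    · have hb := b.isLt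
      have hvb : vv r (Sum.inr (Sum.inl b)) =
          koszul 2 (formMonomial (mk2 (b.1 + 1) (r - 2 - b.1)) Finset.univ) := by
        rw [koszul_fm_2, show r - 2 - b.1 + 1 = r - 1 - b.1 by omega]
        rfl
      rw [hvb]
      exact hκ _ _ (by omega)
    · rcases u <;> rcases w
      · have hkey : vv r (Sum.inr (Sum.inr (false, false))) =
            ((r : ℝ) + 1)⁻¹ • (dj1 r +
              (r : ℝ) • koszul 2 (formMonomial (mk2 (r - 1) 0) Finset.univ)) := by
          rw [dj1, extD_fm_0, koszul_fm_2, show r - 1 + 1 = r by omega]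
          simp only [vv, Nat.cast_one]
          rw [eq_inv_smul_iff₀ (by positivity : ((r : ℝ) + 1) ≠ 0)]
          module
        rw [hkey]
        exact Submodule.smul_mem _ _ (Submodule.add_mem _ hd1
          (Submodule.smul_mem _ _ (hκ (r - 1) 0 (by omega))))
      · have hkey : vv r (Sum.inr (Sum.inr (false, true))) =
            ((r : ℝ) + 1)⁻¹ • (dj2 r +
              koszul 2 (formMonomial (mk2 0 (r - 1)) Finset.univ)) := by
          rw [dj2, extD_fm_0, koszul_fm_2, show r - 1 + 1 = r by omega]
          simp only [vv, Nat.cast_one]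
          rw [eq_inv_smul_iff₀ (by positivity : ((r : ℝ) + 1) ≠ 0)]
          module
        rw [hkey]
        exact Submodule.smul_mem _ _ (Submodule.add_mem _ hd2 (hκ 0 (r - 1) (by omega)))
      · have hkey : vv r (Sum.inr (Sum.inr (true, false))) =
            ((r : ℝ) + 1)⁻¹ • (dj1 r -
              koszul 2 (formMonomial (mk2 (r - 1) 0) Finset.univ)) := by
          rw [dj1, extD_fm_0, koszul_fm_2, show r - 1 + 1 = r by omega]
          simp only [vv, Nat.cast_one]
          rw [eq_inv_smul_iff₀ (by positivity : ((r : ℝ) + 1) ≠ 0)]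
          module
        rw [hkey]
        exact Submodule.smul_mem _ _ (Submodule.sub_mem _ hd1 (hκ (r - 1) 0 (by omega)))
      · have hkey : vv r (Sum.inr (Sum.inr (true, true))) =
            ((r : ℝ) + 1)⁻¹ • (dj2 r -
              (r : ℝ) • koszul 2 (formMonomial (mk2 0 (r - 1)) Finset.univ)) := by
          rw [dj2, extD_fm_0, koszul_fm_2, show r - 1 + 1 = r by omega]
          simp only [vv, Nat.cast_one]
          rw [eq_inv_smul_iff₀ (by positivity : ((r : ℝ) + 1) ≠ 0)]
          module
        rw [hkey]
        exact Submodule.smul_mem _ _ (Submodule.sub_mem _ hd2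
          (Submodule.smul_mem _ _ (hκ 0 (r - 1) (by omega))))

lemma Sm_rank (r : ℕ) (hr : 2 ≤ r) :
    Module.finrank ℝ (SminusSpace 2 r 1) = r ^ 2 + 2 * r + 2 := by
  rw [Sm_span_eq r hr,
    finrank_span_eq_card (linearIndependent_of_dual (vv r) (ee r) (dual_ee_vv r hr)),
    card_Idx r hr]
/-- Basis family for `r = 1`. -/
noncomputable def ww : Bool × Bool → PolyForm 2
  | (false, false) => formMonomial (mk2 0 0) {0}
  | (false, true) => formMonomial (mk2 0 0) {1}
  | (true, false) => formMonomial (mk2 1 0) {1}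
  | (true, true) => formMonomial (mk2 0 1) {0}

noncomputable def ew : Bool × Bool → (PolyForm 2 →ₗ[ℝ] ℝ)
  | (false, false) => cf {0} (mk2 0 0)
  | (false, true) => cf {1} (mk2 0 0)
  | (true, false) => cf {1} (mk2 1 0)
  | (true, true) => cf {0} (mk2 0 1)

lemma dual_ew_ww (i j : Bool × Bool) : ew i (ww j) = if i = j then 1 else 0 := by
  have hA : ¬((0 : ℕ) = 0 ∧ (1 : ℕ) = 0) := by omega
  have hB : ¬((1 : ℕ) = 0 ∧ (0 : ℕ) = 0) := by omega
  have hC : ¬((0 : ℕ) = 1 ∧ (0 : ℕ) = 0) := by omega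
  have hD : ¬((0 : ℕ) = 0 ∧ (0 : ℕ) = 1) := by omega
  obtain ⟨u, w⟩ := i
  obtain ⟨u', w'⟩ := j
  rcases u <;> rcases w <;> rcases u' <;> rcases w' <;> simp only [ww, ew] <;>
    first
      | (rw [cf_fm_self]; simp)
      | (rw [cf_fm_ne2 _ _ (show ({0} : Finset (Fin 2)) ≠ {1} by decide)]; simp)
      | (rw [cf_fm_ne2 _ _ (show ({1} : Finset (Fin 2)) ≠ {0} by decide)]; simp)
      | (rw [cf_mk2_ne _ _ hA]; simp)
      | (rw [cf_mk2_ne _ _ hB]; simp)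
      | (rw [cf_mk2_ne _ _ hC]; simp)
      | (rw [cf_mk2_ne _ _ hD]; simp)

lemma Sm_span_eq_one : SminusSpace 2 1 1 = Submodule.span ℝ (Set.range ww) := by
  rw [Sm_eq 1 le_rfl]
  apply le_antisymm
  · refine sup_le (sup_le ?_ ?_) ?_
    · rw [Pspace]
      refine Submodule.span_le.2 ?_
      rintro ω ⟨α, σ, hc, hd, rfl⟩
      rw [mdeg_eq] at hd
      have h0 : α 0 = 0 := by omega
      have h1 : α 1 = 0 := by omega
      rw [show (α : Fin 2 →₀ ℕ) = mk2 (α 0) (α 1) from eq_mk2 α, h0, h1]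
      rcases card_one_cases hc with rfl | rfl
      · exact Submodule.subset_span ⟨(false, false), rfl⟩
      · exact Submodule.subset_span ⟨(false, true), rfl⟩
    · refine Submodule.span_le.2 ?_
      rintro x hx
      simp only [Set.mem_insert_iff, Set.mem_singleton_iff] at hx
      rcases hx with rfl | rfl
      · rw [dj1, extD_fm_0]
        exact Submodule.add_mem _
          (Submodule.smul_mem _ _ (Submodule.subset_span ⟨(true, true), rfl⟩))
          (Submodule.smul_mem _ _ (Submodule.subset_span ⟨(true, false), rfl⟩))
      · rw [dj2, extD_fm_0]
        exact Submodule.add_mem _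
          (Submodule.smul_mem _ _ (Submodule.subset_span ⟨(true, true), rfl⟩))
          (Submodule.smul_mem _ _ (Submodule.subset_span ⟨(true, false), rfl⟩))
    · rw [Pspace, Submodule.map_span]
      refine Submodule.span_le.2 ?_
      rintro x ⟨ω, ⟨α, σ, hc, hd, rfl⟩, rfl⟩
      have hσ : σ = Finset.univ := card_two_univ hc
      subst hσ
      rw [mdeg_eq] at hd
      have h0 : α 0 = 0 := by omega
      have h1 : α 1 = 0 := by omega
      rw [show (α : Fin 2 →₀ ℕ) = mk2 (α 0) (α 1) from eq_mk2 α, h0, h1, koszul_fm_2]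
      exact Submodule.sub_mem _
        (Submodule.subset_span ⟨(true, false), rfl⟩)
        (Submodule.subset_span ⟨(true, true), rfl⟩)
  · refine Submodule.span_le.2 ?_
    rintro x ⟨idx, rfl⟩
    have hd1 : dj1 1 ∈ (Pspace 2 0 1 ⊔ Submodule.span ℝ {dj1 1, dj2 1}) ⊔
        Submodule.map (koszul 2) (Pspace 2 0 2) :=
      Submodule.mem_sup_left (Submodule.mem_sup_right
        (Submodule.subset_span (Set.mem_insert _ _)))
    have hκ : koszul 2 (formMonomial (mk2 0 0) Finset.univ) ∈
        (Pspace 2 0 1 ⊔ Submodule.span ℝ {dj1 1, dj2 1}) ⊔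
          Submodule.map (koszul 2) (Pspace 2 0 2) :=
      Submodule.mem_sup_right (Submodule.mem_map_of_mem
        (Submodule.subset_span ⟨mk2 0 0, Finset.univ, by simp, by simp, rfl⟩))
    obtain ⟨u, w⟩ := idx
    rcases u <;> rcases w
    · exact Submodule.mem_sup_left (Submodule.mem_sup_left
        (Submodule.subset_span ⟨mk2 0 0, {0}, Finset.card_singleton _, by simp, rfl⟩))
    · exact Submodule.mem_sup_left (Submodule.mem_sup_left
        (Submodule.subset_span ⟨mk2 0 0, {1}, Finset.card_singleton _, by simp, rfl⟩))
    · have hkey : ww (true, false) =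
          (2 : ℝ)⁻¹ • (dj1 1 + koszul 2 (formMonomial (mk2 0 0) Finset.univ)) := by
        rw [dj1, extD_fm_0, koszul_fm_2]
        simp only [ww, Nat.cast_one]
        rw [eq_inv_smul_iff₀ (by norm_num : (2 : ℝ) ≠ 0)]
        module
      rw [hkey]
      exact Submodule.smul_mem _ _ (Submodule.add_mem _ hd1 hκ)
    · have hkey : ww (true, true) =
          (2 : ℝ)⁻¹ • (dj1 1 - koszul 2 (formMonomial (mk2 0 0) Finset.univ)) := by
        rw [dj1, extD_fm_0, koszul_fm_2]
        simp only [ww, Nat.cast_one]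
        rw [eq_inv_smul_iff₀ (by norm_num : (2 : ℝ) ≠ 0)]
        module
      rw [hkey]
      exact Submodule.smul_mem _ _ (Submodule.sub_mem _ hd1 hκ)

lemma Sm_rank_one : Module.finrank ℝ (SminusSpace 2 1 1) = 4 := by
  rw [Sm_span_eq_one,
    finrank_span_eq_card (linearIndependent_of_dual ww ew dual_ew_ww)]
  simp

/-- in dimension `n = 2`:
`dim J_rΛ^0(ℝ²) = 4 + 4(r−1) + C(r−2, 2) − C(r+2, 2)`, `dim J_rΛ^1(ℝ²) = 0`, and
consequently `dim S_r^-Λ^1(□₂) = r² + 2r + 2` for `r ≥ 2`, and `= 4` for `r = 1`. -/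
theorem dims_dimension_two (r : ℕ) (hr : 1 ≤ r) :
    (Module.finrank ℝ (Jspace 2 r 0) : ℤ) =
      4 + 4 * ((r : ℤ) - 1) + ((r - 2).choose 2 : ℤ) - ((r + 2).choose 2 : ℤ) ∧
    Module.finrank ℝ (Jspace 2 r 1) = 0 ∧
    (2 ≤ r → Module.finrank ℝ (SminusSpace 2 r 1) = r ^ 2 + 2 * r + 2) ∧
    (r = 1 → Module.finrank ℝ (SminusSpace 2 r 1) = 4) := by
  refine ⟨claim1 r hr, ?_, fun h2 => Sm_rank r h2, fun h1 => h1 ▸ Sm_rank_one⟩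
  rw [J1_bot]
  exact finrank_bot ℝ _
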